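/- arXiv:2004.01624 — 2 statements merged into one kernel-verified Lean document; each statement's English description precedes it below -/
import Mathlib

section
/- (Proposition 3.) Let Λ be a cross-impact model and c > 0 a constant such that for every triple (Σ,Ω,R) the matrix Λ(Σ,Ω,R) is symmetric, positive semidefinite, and satisfies Λ(Σ,Ω,R) · Ω · Λ(Σ,Ω,R)ᵀ = c·Σ (return covariance consistency up to the multiplicative constant c). Then for every triple (Σ,Ω,R) one has Λ(Σ,Ω,R) = √c · Λ_kyle(Σ,Ω), i.e. Λ equals the Kyle model up to a multiplicative constant. -/
open Matrix
open scoped Classical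

/-- `sqrtm A` is the unique symmetric positive semidefinite square root of a
symmetric positive semidefinite real matrix `A` (junk value `0` otherwise). -/
noncomputable def sqrtm {n : ℕ} (A : Matrix (Fin n) (Fin n) ℝ) : Matrix (Fin n) (Fin n) ℝ :=
  if h : A.PosSemidef then
    h.1.eigenvectorUnitary.1 * diagonal ((↑) ∘ Real.sqrt ∘ h.1.eigenvalues) *
      (star h.1.eigenvectorUnitary : Matrix (Fin n) (Fin n) ℝ)
  else 0

/-- The Kyle cross-impact matrix `Λ_kyle(Σ,Ω) = (√Ω)⁻¹ √(√Ω Σ √Ω) (√Ω)⁻¹`. -/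
noncomputable def kyle {n : ℕ} (S W : Matrix (Fin n) (Fin n) ℝ) : Matrix (Fin n) (Fin n) ℝ :=
  (sqrtm W)⁻¹ * sqrtm (sqrtm W * S * sqrtm W) * (sqrtm W)⁻¹

lemma psd_smul_aux {n : ℕ} {M : Matrix (Fin n) (Fin n) ℝ} (hM : M.PosSemidef)
    {r : ℝ} (hr : 0 ≤ r) : (r • M).PosSemidef := by
  constructor
  · unfold Matrix.IsHermitian at *
    rw [conjTranspose_smul, hM.1]
    simp
  · exact (hM.smul hr).2

open scoped MatrixOrder

lemma sqrtm_eq_cfc_sqrt {n : ℕ} {A : Matrix (Fin n) (Fin n) ℝ} (h : A.PosSemidef) :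
    sqrtm A = CFC.sqrt A := by
  rw [sqrtm, dif_pos h, CFC.sqrt_eq_real_sqrt A h.nonneg, cfcₙ_eq_cfc, h.1.cfc_eq]
  rfl

/-- Proposition 3: a symmetric, positive semidefinite, return covariance
consistent cross-impact model equals the Kyle model up to a multiplicative constant. -/
theorem kyle_unique_symm_psd_covConsistent {n : ℕ}
    (Λ : Matrix (Fin n) (Fin n) ℝ → Matrix (Fin n) (Fin n) ℝ → Matrix (Fin n) (Fin n) ℝ → Matrix (Fin n) (Fin n) ℝ)
    (c : ℝ) (hc : 0 < c)
    (hsymm : ∀ S W R : Matrix (Fin n) (Fin n) ℝ, S.PosSemidef → W.PosDef → (Λ S W R).IsSymm)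
    (hpsd : ∀ S W R : Matrix (Fin n) (Fin n) ℝ, S.PosSemidef → W.PosDef → (Λ S W R).PosSemidef)
    (hcons : ∀ S W R : Matrix (Fin n) (Fin n) ℝ, S.PosSemidef → W.PosDef →
      Λ S W R * W * (Λ S W R)ᵀ = c • S) :
    ∀ S W R : Matrix (Fin n) (Fin n) ℝ, S.PosSemidef → W.PosDef →
      Λ S W R = Real.sqrt c • kyle S W := by
  intro S W R hS hW
  set L := Λ S W R with hLdef
  have hLsymm : Lᵀ = L := hsymm S W R hS hW
  have hLpsd : L.PosSemidef := hpsd S W R hS hW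
  have hLcons : L * W * Lᵀ = c • S := hcons S W R hS hW
  set B := CFC.sqrt W with hBdef
  have hBW : sqrtm W = B := sqrtm_eq_cfc_sqrt hW.posSemidef
  have hBpsd : B.PosSemidef := (CFC.sqrt_nonneg W).posSemidef
  have hBherm : Bᴴ = B := hBpsd.1
  have hBB : B * B = W := CFC.sqrt_mul_sqrt_self W hW.posSemidef.nonneg
  have hdetB : IsUnit B.det := by
    rw [isUnit_iff_ne_zero]
    intro h
    have : W.det = 0 := by rw [← hBB, det_mul, h, mul_zero]
    exact (ne_of_gt hW.det_pos) this
  have hBSB : (B * S * B).PosSemidef := by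
    have := hS.mul_mul_conjTranspose_same B
    rwa [hBherm] at this
  set N := CFC.sqrt (B * S * B) with hNdef
  have hNval : sqrtm (B * S * B) = N := sqrtm_eq_cfc_sqrt hBSB
  have hNpsd : N.PosSemidef := (CFC.sqrt_nonneg _).posSemidef
  have hNN : N * N = B * S * B := CFC.sqrt_mul_sqrt_self _ hBSB.nonneg
  set M := B * L * B with hMdef
  have hMpsd : M.PosSemidef := by
    have := hLpsd.mul_mul_conjTranspose_same B
    rwa [hBherm] at this
  have hsc : (0:ℝ) ≤ Real.sqrt c := Real.sqrt_nonneg c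
  have hTpsd : (Real.sqrt c • N).PosSemidef := psd_smul_aux hNpsd hsc
  have hMsq : M ^ 2 = (Real.sqrt c • N) ^ 2 := by
    have h1 : M ^ 2 = B * (L * W * Lᵀ) * B := by
      rw [pow_two, hMdef, hLsymm]
      rw [← hBB]
      noncomm_ring
    have h2 : (Real.sqrt c • N) ^ 2 = c • (B * S * B) := by
      rw [pow_two, smul_mul_smul_comm, hNN, Real.mul_self_sqrt hc.le]
    rw [h1, h2, hLcons, Matrix.mul_smul, Matrix.smul_mul]
  have hMT : M = Real.sqrt c • N := (CFC.mul_self_eq_mul_self_iff M _ hMpsd.nonneg hTpsd.nonneg).1 (by simpa only [pow_two] using hMsq)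
  have hL : L = B⁻¹ * M * B⁻¹ := by
    rw [hMdef]
    rw [show B⁻¹ * (B * L * B) * B⁻¹ = (B⁻¹ * B) * L * (B * B⁻¹) by noncomm_ring,
      Matrix.nonsing_inv_mul B hdetB, Matrix.mul_nonsing_inv B hdetB, one_mul, mul_one]
  rw [hL, hMT]
  unfold kyle
  rw [hBW, hNval, Matrix.mul_smul, Matrix.smul_mul]
end

section
/- (Weak cross-stability of the Kyle model.) Let Σ be an n×n real symmetric positive semidefinite matrix, Ω an n×n real symmetric positive definite matrix, and V a linear subspace of ℝⁿ. Then there exists a constant C such that for every ε ∈ (0, 1], ‖Π̄_V Λ_kyle(Σ, Ω^q_ε) Π_V‖ ≤ C and ‖Π_V Λ_kyle(Σ, Ω^q_ε) Π̄_V‖ ≤ C, where Ω^q_ε := (Π̄_V + εΠ_V) Ω (Π̄_V + εΠ_V); i.e. the off-diagonal blocks of the Kyle cross-impact matrix remain bounded as the liquidity of the instruments in V is scaled down to zero. -/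
open Matrix
open scoped Classical
open scoped RealInnerProductSpace

/-- The matrix of the orthogonal projection of `ℝⁿ` (with the standard inner product)
onto the linear subspace `V`. -/
noncomputable def projMat {n : ℕ} (V : Submodule ℝ (EuclideanSpace ℝ (Fin n))) :
    Matrix (Fin n) (Fin n) ℝ :=
  LinearMap.toMatrix' ((EuclideanSpace.equiv (Fin n) ℝ).toLinearMap ∘ₗ V.subtype ∘ₗ
    (V.orthogonalProjectionOnto).toLinearMap ∘ₗ ((EuclideanSpace.equiv (Fin n) ℝ).symm.toLinearMap))

/-- The regularizing matrix `Π̄_V + ε Π_V`. -/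
noncomputable def reg {n : ℕ} (V : Submodule ℝ (EuclideanSpace ℝ (Fin n))) (ε : ℝ) :
    Matrix (Fin n) (Fin n) ℝ :=
  (1 - projMat V) + ε • projMat V

-- auxiliary lemmas

lemma ct_eq {n : ℕ} (A : Matrix (Fin n) (Fin n) ℝ) : Aᴴ = Aᵀ := by
  ext i j; simp [Matrix.conjTranspose_apply]

lemma projMat_idem {n : ℕ} (V : Submodule ℝ (EuclideanSpace ℝ (Fin n))) :
    projMat V * projMat V = projMat V := by
  rw [projMat, ← LinearMap.toMatrix'_comp]
  congr 1
  ext x i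
  exact congrArg (fun v : V => (v : EuclideanSpace ℝ (Fin n)) i)
    (Submodule.orthogonalProjectionOnto_mem_subspace_eq_self (K := V)
      ((V.orthogonalProjectionOnto) ((EuclideanSpace.equiv (Fin n) ℝ).symm (Pi.single x 1))))

lemma projMat_symm {n : ℕ} (V : Submodule ℝ (EuclideanSpace ℝ (Fin n))) :
    (projMat V)ᵀ = projMat V := by
  have key : ∀ a b : Fin n,
      (((V.orthogonalProjectionOnto) (EuclideanSpace.single a (1:ℝ))) : EuclideanSpace ℝ (Fin n)) b
      = (((V.orthogonalProjectionOnto) (EuclideanSpace.single b (1:ℝ))) : EuclideanSpace ℝ (Fin n)) a := by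
    intro a b
    have h := Submodule.inner_starProjection_left_eq_right V
      (EuclideanSpace.single a (1:ℝ)) (EuclideanSpace.single b (1:ℝ))
    simpa [EuclideanSpace.inner_single_left, EuclideanSpace.inner_single_right] using h
  ext i j
  simp only [Matrix.transpose_apply, projMat, LinearMap.toMatrix'_apply]
  have hs : ∀ c : Fin n, (fun j' => if j' = c then (1:ℝ) else 0) = Pi.single c 1 := by
    intro c; ext j'; simp [Pi.single_apply]
  simp only [hs, LinearMap.coe_comp, Function.comp_apply, LinearEquiv.coe_coe,
    ContinuousLinearEquiv.coe_toLinearEquiv, Submodule.coe_subtype]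
  exact key i j

lemma sqrtm_psd {n : ℕ} {A : Matrix (Fin n) (Fin n) ℝ} (hA : A.PosSemidef) :
    (sqrtm A).PosSemidef := by
  rw [sqrtm, dif_pos hA]
  have hd : (diagonal ((↑) ∘ Real.sqrt ∘ hA.1.eigenvalues) : Matrix (Fin n) (Fin n) ℝ).PosSemidef :=
    PosSemidef.diagonal (fun i => Real.sqrt_nonneg _)
  have := hd.mul_mul_conjTranspose_same (hA.1.eigenvectorUnitary : Matrix (Fin n) (Fin n) ℝ)
  convert this using 2
  simp [Matrix.star_eq_conjTranspose]

lemma sqrtm_mul_self {n : ℕ} {A : Matrix (Fin n) (Fin n) ℝ} (hA : A.PosSemidef) :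
    sqrtm A * sqrtm A = A := by
  rw [sqrtm, dif_pos hA]
  have hUU : (star hA.1.eigenvectorUnitary : Matrix (Fin n) (Fin n) ℝ) *
      (hA.1.eigenvectorUnitary : Matrix (Fin n) (Fin n) ℝ) = 1 := by simp
  rw [show ∀ X Y Z : Matrix (Fin n) (Fin n) ℝ, X * Y * Z * (X * Y * Z) = X * (Y * (Z * X) * Y) * Z
    from fun X Y Z => by noncomm_ring, hUU, Matrix.mul_one, diagonal_mul_diagonal]
  conv_rhs => rw [hA.1.spectral_theorem]
  change _ = (hA.1.eigenvectorUnitary : Matrix (Fin n) (Fin n) ℝ) * _ *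
    (star hA.1.eigenvectorUnitary : Matrix (Fin n) (Fin n) ℝ)
  congr 2
  congr 1
  funext i
  simp [Real.mul_self_sqrt (hA.eigenvalues_nonneg i)]

lemma sqrtm_symm {n : ℕ} {A : Matrix (Fin n) (Fin n) ℝ} (hA : A.PosSemidef) :
    (sqrtm A)ᵀ = sqrtm A := by
  rw [← ct_eq]; exact (sqrtm_psd hA).1

lemma sqrtm_det {n : ℕ} {A : Matrix (Fin n) (Fin n) ℝ} (hA : A.PosDef) :
    IsUnit (sqrtm A).det := by
  have h : (sqrtm A).det * (sqrtm A).det = A.det := by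
    rw [← Matrix.det_mul, sqrtm_mul_self hA.posSemidef]
  have hne : A.det ≠ 0 := ne_of_gt hA.det_pos
  refine isUnit_iff_ne_zero.2 fun h0 => hne ?_
  rw [← h, h0, mul_zero]

lemma dp_mulVec_mulVec {n : ℕ} (A B : Matrix (Fin n) (Fin n) ℝ) (x y : Fin n → ℝ) :
    (A *ᵥ x) ⬝ᵥ (B *ᵥ y) = x ⬝ᵥ ((Aᵀ * B) *ᵥ y) := by
  conv_rhs => rw [← Matrix.mulVec_mulVec, Matrix.dotProduct_mulVec, Matrix.vecMul_transpose]

/-- generalized Cauchy-Schwarz -/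
lemma key_cs {n : ℕ} (A M : Matrix (Fin n) (Fin n) ℝ) (hA : A.PosDef) (hM : Mᵀ = M)
    (u v : Fin n → ℝ) :
    (u ⬝ᵥ (M *ᵥ v)) ^ 2 ≤ (u ⬝ᵥ (A⁻¹ *ᵥ u)) * (v ⬝ᵥ ((M * A * M) *ᵥ v)) := by
  set Q := sqrtm A with hQdef
  have hQQ : Q * Q = A := sqrtm_mul_self hA.posSemidef
  have hQs : Qᵀ = Q := sqrtm_symm hA.posSemidef
  have hQdet : IsUnit Q.det := sqrtm_det hA
  set a : Fin n → ℝ := Q⁻¹ *ᵥ u with ha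
  set b : Fin n → ℝ := Q *ᵥ (M *ᵥ v) with hb
  have hQinvT : (Q⁻¹)ᵀ = Q⁻¹ := by rw [Matrix.transpose_nonsing_inv, hQs]
  have h1 : a ⬝ᵥ b = u ⬝ᵥ (M *ᵥ v) := by
    rw [ha, hb, dp_mulVec_mulVec, hQinvT, Matrix.mulVec_mulVec,
      Matrix.nonsing_inv_mul Q hQdet, Matrix.one_mul]
  have h2 : a ⬝ᵥ a = u ⬝ᵥ (A⁻¹ *ᵥ u) := by
    rw [ha, dp_mulVec_mulVec, hQinvT, ← Matrix.mul_inv_rev, hQQ]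
  have h3 : b ⬝ᵥ b = v ⬝ᵥ ((M * A * M) *ᵥ v) := by
    rw [hb, dp_mulVec_mulVec, hQs, hQQ, dp_mulVec_mulVec, hM]
    simp [Matrix.mulVec_mulVec, Matrix.mul_assoc]
  rw [← h1, ← h2, ← h3]
  have := Finset.sum_mul_sq_le_sq_mul_sq Finset.univ a b
  simpa [dotProduct, pow_two] using this


lemma kyle_symm {n : ℕ} {S A : Matrix (Fin n) (Fin n) ℝ} (hS : S.PosSemidef) (hA : A.PosDef) :
    (kyle S A)ᵀ = kyle S A := by
  have hQs : (sqrtm A)ᵀ = sqrtm A := sqrtm_symm hA.posSemidef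
  have hQSQ : (sqrtm A * S * sqrtm A).PosSemidef := by
    have := hS.mul_mul_conjTranspose_same (sqrtm A)
    rwa [ct_eq, hQs] at this
  have hTs : (sqrtm (sqrtm A * S * sqrtm A))ᵀ = sqrtm (sqrtm A * S * sqrtm A) := sqrtm_symm hQSQ
  have hQinvT : ((sqrtm A)⁻¹)ᵀ = (sqrtm A)⁻¹ := by rw [Matrix.transpose_nonsing_inv, hQs]
  rw [kyle, Matrix.transpose_mul, Matrix.transpose_mul, hQinvT, hTs, Matrix.mul_assoc]
  noncomm_ring

lemma kyle_mul {n : ℕ} {S A : Matrix (Fin n) (Fin n) ℝ} (hS : S.PosSemidef) (hA : A.PosDef) :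
    kyle S A * A * kyle S A = S := by
  set Q := sqrtm A with hQdef
  have hQs : Qᵀ = Q := sqrtm_symm hA.posSemidef
  have hQQ : Q * Q = A := sqrtm_mul_self hA.posSemidef
  have hQdet : IsUnit Q.det := sqrtm_det hA
  have hQSQ : (Q * S * Q).PosSemidef := by
    have := hS.mul_mul_conjTranspose_same Q
    rwa [ct_eq, hQs] at this
  set T := sqrtm (Q * S * Q) with hTdef
  have hTT : T * T = Q * S * Q := sqrtm_mul_self hQSQ
  have h1 : Q⁻¹ * Q = 1 := Matrix.nonsing_inv_mul Q hQdet
  have h2 : Q * Q⁻¹ = 1 := Matrix.mul_nonsing_inv Q hQdet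
  rw [kyle, ← hQdef, ← hTdef, ← hQQ]
  calc Q⁻¹ * T * Q⁻¹ * (Q * Q) * (Q⁻¹ * T * Q⁻¹)
      = Q⁻¹ * T * ((Q⁻¹ * Q) * (Q * Q⁻¹)) * T * Q⁻¹ := by noncomm_ring
    _ = Q⁻¹ * (T * T) * Q⁻¹ := by rw [h1, h2]; noncomm_ring
    _ = (Q⁻¹ * Q) * S * (Q * Q⁻¹) := by rw [hTT]; noncomm_ring
    _ = S := by rw [h1, h2]; noncomm_ring

lemma reg_mul_reg {n : ℕ} (V : Submodule ℝ (EuclideanSpace ℝ (Fin n))) (ε δ : ℝ) :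
    reg V ε * reg V δ = (1 - projMat V) + (ε * δ) • projMat V := by
  have hP := projMat_idem V
  have h1 : (1 - projMat V) * projMat V = 0 := by
    rw [Matrix.sub_mul, Matrix.one_mul, hP, sub_self]
  have h2 : projMat V * (1 - projMat V) = 0 := by
    rw [Matrix.mul_sub, Matrix.mul_one, hP, sub_self]
  have h3 : (1 - projMat V) * (1 - projMat V) = 1 - projMat V := by
    rw [Matrix.mul_sub, Matrix.mul_one, h1, sub_zero]
  rw [reg, reg, Matrix.add_mul, Matrix.mul_add, Matrix.mul_add, Matrix.mul_smul,
    Matrix.smul_mul, Matrix.smul_mul, Matrix.mul_smul, h3, h1, h2, hP, smul_smul,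
    smul_zero, smul_zero, add_zero, zero_add]

lemma reg_mul_inv {n : ℕ} (V : Submodule ℝ (EuclideanSpace ℝ (Fin n))) {ε : ℝ} (hε : ε ≠ 0) :
    reg V ε * reg V ε⁻¹ = 1 ∧ reg V ε⁻¹ * reg V ε = 1 := by
  constructor
  · rw [reg_mul_reg, mul_inv_cancel₀ hε, one_smul]; abel
  · rw [reg_mul_reg, inv_mul_cancel₀ hε, one_smul]; abel

lemma reg_symm {n : ℕ} (V : Submodule ℝ (EuclideanSpace ℝ (Fin n))) (ε : ℝ) :
    (reg V ε)ᵀ = reg V ε := by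
  rw [reg, Matrix.transpose_add, Matrix.transpose_sub, Matrix.transpose_smul,
    Matrix.transpose_one, projMat_symm]


lemma reg_det_isUnit {n : ℕ} (V : Submodule ℝ (EuclideanSpace ℝ (Fin n))) {ε : ℝ} (hε : ε ≠ 0) :
    IsUnit (reg V ε).det := by
  have h := (reg_mul_inv V hε).1
  exact IsUnit.of_mul_eq_one _ (by rw [← Matrix.det_mul, h, Matrix.det_one])

lemma posDef_conj {n : ℕ} {W R : Matrix (Fin n) (Fin n) ℝ} (hW : W.PosDef)
    (hRs : Rᵀ = R) (hR : IsUnit R.det) : (R * W * R).PosDef := by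
  have hWs : Wᵀ = W := by rw [← ct_eq]; exact hW.1
  refine Matrix.PosDef.of_dotProduct_mulVec_pos ?_ ?_
  · show (R * W * R)ᴴ = R * W * R
    rw [ct_eq, Matrix.transpose_mul, Matrix.transpose_mul, hRs, hWs, Matrix.mul_assoc]
  · intro x hx
    have hy : R *ᵥ x ≠ 0 := by
      have hinj := Matrix.mulVec_injective_iff_isUnit.mpr (Matrix.isUnit_iff_isUnit_det R |>.2 hR)
      intro h0
      exact hx (hinj (by rw [h0, Matrix.mulVec_zero]))
    have hpos := hW.dotProduct_mulVec_pos hy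
    simp only [star_trivial] at hpos ⊢
    have heq : (R *ᵥ x) ⬝ᵥ (W *ᵥ (R *ᵥ x)) = x ⬝ᵥ ((R * W * R) *ᵥ x) := by
      rw [dp_mulVec_mulVec, Matrix.mulVec_mulVec, hRs, Matrix.mul_assoc]
    rw [← heq]
    exact hpos

lemma inv_sandwich {n : ℕ} (V : Submodule ℝ (EuclideanSpace ℝ (Fin n))) {ε : ℝ} (hε : ε ≠ 0)
    {W : Matrix (Fin n) (Fin n) ℝ} (hW : W.PosDef) :
    (1 - projMat V) * (reg V ε * W * reg V ε)⁻¹ * (1 - projMat V)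
      = (1 - projMat V) * W⁻¹ * (1 - projMat V) := by
  have hWdet : IsUnit W.det := isUnit_iff_ne_zero.2 (ne_of_gt hW.det_pos)
  have hWW : W * W⁻¹ = 1 := Matrix.mul_nonsing_inv W hWdet
  have hRR' := (reg_mul_inv V hε).1
  have hinv : (reg V ε * W * reg V ε)⁻¹ = reg V ε⁻¹ * W⁻¹ * reg V ε⁻¹ := by
    apply Matrix.inv_eq_right_inv
    calc reg V ε * W * reg V ε * (reg V ε⁻¹ * W⁻¹ * reg V ε⁻¹)
        = reg V ε * (W * (reg V ε * reg V ε⁻¹) * W⁻¹) * reg V ε⁻¹ := by noncomm_ring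
      _ = 1 := by rw [hRR', Matrix.mul_one, hWW, Matrix.mul_one, hRR']
  have hP := projMat_idem V
  have h1 : (1 - projMat V) * projMat V = 0 := by
    rw [Matrix.sub_mul, Matrix.one_mul, hP, sub_self]
  have h2 : projMat V * (1 - projMat V) = 0 := by
    rw [Matrix.mul_sub, Matrix.mul_one, hP, sub_self]
  have h3 : (1 - projMat V) * reg V ε⁻¹ = 1 - projMat V := by
    rw [reg, Matrix.mul_add, Matrix.mul_smul, h1, smul_zero, add_zero, Matrix.mul_sub,
      Matrix.mul_one, h1, sub_zero]
  have h4 : reg V ε⁻¹ * (1 - projMat V) = 1 - projMat V := by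
    rw [reg, Matrix.add_mul, Matrix.smul_mul, h2, smul_zero, add_zero, Matrix.sub_mul,
      Matrix.one_mul, h2, sub_zero]
  rw [hinv]
  calc (1 - projMat V) * (reg V ε⁻¹ * W⁻¹ * reg V ε⁻¹) * (1 - projMat V)
      = ((1 - projMat V) * reg V ε⁻¹) * W⁻¹ * (reg V ε⁻¹ * (1 - projMat V)) := by noncomm_ring
    _ = (1 - projMat V) * W⁻¹ * (1 - projMat V) := by rw [h3, h4]

lemma entry_dp {n : ℕ} (X N Y : Matrix (Fin n) (Fin n) ℝ) (i j : Fin n) :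
    (X * N * Y) i j = (fun k => X i k) ⬝ᵥ (N *ᵥ (fun l => Y l j)) := by
  simp only [Matrix.mul_apply, Matrix.mulVec, dotProduct, Finset.sum_mul, Finset.mul_sum]
  rw [Finset.sum_comm]
  apply Finset.sum_congr rfl
  intro k _
  apply Finset.sum_congr rfl
  intro l _
  ring


attribute [local instance] Matrix.normedAddCommGroup

/-- weak cross-stability of the Kyle model: the off-diagonal blocks of
the Kyle cross-impact matrix remain bounded as liquidity in `V` is scaled to zero. -/
theorem kyle_weak_cross_stable {n : ℕ}
    (S W : Matrix (Fin n) (Fin n) ℝ) (hS : S.PosSemidef) (hW : W.PosDef)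
    (V : Submodule ℝ (EuclideanSpace ℝ (Fin n))) :
    ∃ C : ℝ, ∀ ε : ℝ, ε ∈ Set.Ioc (0 : ℝ) 1 →
      ‖(1 - projMat V) * kyle S (reg V ε * W * reg V ε) * projMat V‖ ≤ C ∧
      ‖projMat V * kyle S (reg V ε * W * reg V ε) * (1 - projMat V)‖ ≤ C := by
  classical
  set P := projMat V with hPdef
  have hPT : (1 - P)ᵀ = 1 - P := by
    rw [Matrix.transpose_sub, Matrix.transpose_one, hPdef, projMat_symm]
  -- the uniform constant
  set t : Fin n → Fin n → ℝ := fun i j =>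
    Real.sqrt (((fun k => (1 - P) i k) ⬝ᵥ (W⁻¹ *ᵥ (fun k => (1 - P) i k))) *
      ((fun l => P l j) ⬝ᵥ (S *ᵥ (fun l => P l j)))) with ht
  refine ⟨∑ i : Fin n, ∑ j : Fin n, t i j, ?_⟩
  intro ε hε
  have hεne : ε ≠ 0 := ne_of_gt hε.1
  have hΩd : (reg V ε * W * reg V ε).PosDef :=
    posDef_conj hW (reg_symm V ε) (reg_det_isUnit V hεne)
  set M := kyle S (reg V ε * W * reg V ε) with hMdef
  have hMs : Mᵀ = M := kyle_symm hS hΩd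
  have hMAM : M * (reg V ε * W * reg V ε) * M = S := kyle_mul hS hΩd
  have htnn : ∀ i j, 0 ≤ t i j := fun i j => Real.sqrt_nonneg _
  have hC0 : (0:ℝ) ≤ ∑ i : Fin n, ∑ j : Fin n, t i j :=
    Finset.sum_nonneg fun i _ => Finset.sum_nonneg fun j _ => htnn i j
  have hle : ∀ i j, t i j ≤ ∑ i : Fin n, ∑ j : Fin n, t i j := by
    intro i j
    calc t i j ≤ ∑ j : Fin n, t i j :=
          Finset.single_le_sum (fun x _ => htnn i x) (Finset.mem_univ j)
      _ ≤ ∑ i : Fin n, ∑ j : Fin n, t i j :=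
          Finset.single_le_sum (fun x _ => Finset.sum_nonneg fun y _ => htnn x y)
            (Finset.mem_univ i)
  have hentry : ∀ i j, |((1 - P) * M * P) i j| ≤ t i j := by
    intro i j
    have h1 : ((1 - P) * M * P) i j
        = (fun k => (1 - P) i k) ⬝ᵥ (M *ᵥ (fun l => P l j)) := entry_dp _ _ _ i j
    have h2 := key_cs (reg V ε * W * reg V ε) M hΩd hMs
      (fun k => (1 - P) i k) (fun l => P l j)
    rw [hMAM] at h2
    have hT : (fun l => ((1 - P)ᵀ) l i) = (fun k => (1 - P) i k) := by
      funext l; rw [Matrix.transpose_apply]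
    have e2 := entry_dp (1 - P) (reg V ε * W * reg V ε)⁻¹ ((1 - P)ᵀ) i i
    have e3 := entry_dp (1 - P) W⁻¹ ((1 - P)ᵀ) i i
    rw [hT] at e2 e3
    have h3 : (fun k => (1 - P) i k) ⬝ᵥ ((reg V ε * W * reg V ε)⁻¹ *ᵥ (fun k => (1 - P) i k))
        = (fun k => (1 - P) i k) ⬝ᵥ (W⁻¹ *ᵥ (fun k => (1 - P) i k)) := by
      rw [← e2, ← e3, hPT, hPdef, inv_sandwich V hεne hW]
    rw [h3] at h2
    calc |((1 - P) * M * P) i j|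
        = Real.sqrt ((((1 - P) * M * P) i j) ^ 2) := (Real.sqrt_sq_eq_abs _).symm
      _ ≤ t i j := by
          rw [ht, h1]
          exact Real.sqrt_le_sqrt h2
  constructor
  · rw [Matrix.norm_le_iff hC0]
    intro i j
    rw [Real.norm_eq_abs]
    exact le_trans (hentry i j) (hle i j)
  · have htr : P * M * (1 - P) = ((1 - P) * M * P)ᵀ := by
      rw [Matrix.transpose_mul, Matrix.transpose_mul, hPT, hMs, hPdef, projMat_symm,
        ← Matrix.mul_assoc]
    rw [Matrix.norm_le_iff hC0]
    intro i j
    rw [Real.norm_eq_abs, htr, Matrix.transpose_apply]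
    exact le_trans (hentry j i) (hle j i)
end
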